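/- There is no binary 5-cap. That is, there do not exist functions κ : W → ℝ and τ : W → ℝ such that: (i) κ ≥ 0 everywhere, κ_λ > 0, the support S = {w : κ_w > 0} is finite and prefix-closed (if κ_{vH} > 0 or κ_{vL} > 0 then κ_v > 0); (ii) τ_λ = 0 and τ_{vH} = τ_v + κ_v for all words v; and (iii) with β, π defined recursively by β_λ = π_λ = 0, β_{vL} = β_v + π_v, π_{vL} = κ_v − π_v, β_{vH} = β_v, π_{vH} = κ_v, every word v with κ_v > 0 satisfies the inequalities κ_{vL} ≥ 5(β_v + κ_v) − τ_{vL} ≥ 0 and κ_{vH} ≥ τ_{vL} − τ_v − κ_v ≥ 0. -/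
import Mathlib


/-- The two letters of binary words: `H` (high supporter) and `L` (low
supporter). -/
inductive Letter : Type
  | H : Letter
  | L : Letter
deriving DecidableEq

/-- Binary words.  The empty list is the empty word `λ`; the word `vH`
(resp. `vL`) is represented by `Letter.H :: v` (resp. `Letter.L :: v`). -/
abbrev Word : Type := List Letter

/-- The penalty `π`, defined recursively from the heights `κ` by `π_λ = 0`,
`π_{vH} = κ_v` and `π_{vL} = κ_v - π_v`. -/
def pen (κ : Word → ℝ) : Word → ℝ
  | [] => 0
  | Letter.H :: v => κ v
  | Letter.L :: v => κ v - pen κ v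

/-- The quantity `β` (weight above the cone minus own height), defined
recursively by `β_λ = 0`, `β_{vH} = β_v` and `β_{vL} = β_v + π_v`. -/
def wt (κ : Word → ℝ) : Word → ℝ
  | [] => 0
  | Letter.H :: v => wt κ v
  | Letter.L :: v => wt κ v + pen κ v

/-- The piecewise-linear potential used as an inductive invariant:
`capM κ π` is an upper bound for `D = 5 β + 4 κ - τ` at every box. -/
noncomputable def capM (x y : ℝ) : ℝ :=
  max (max (max (37/10 * x - 15/4 * y) (33/10 * x - 2 * y)) (3 * x - y)) (21/10 * x)

set_option maxHeartbeats 10000000 in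
/-- The one-node inductive step, a piece of exact linear arithmetic. -/
lemma five_cap_node (k p b t tL kH kL : ℝ)
    (hk : 0 < k) (hkH : 0 ≤ kH) (hkL : 0 ≤ kL)
    (h1 : 5 * (b + k) - tL ≤ kL) (h2 : 0 ≤ 5 * (b + k) - tL)
    (h3 : tL - t - k ≤ kH) (h4 : 0 ≤ tL - t - k)
    (hH : 0 < kH → 0 ≤ 5 * b + 4 * kH - (t + k) ∧
      5 * b + 4 * kH - (t + k) ≤ capM kH k)
    (hL : 0 < kL → 0 ≤ 5 * (b + p) + 4 * kL - tL ∧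
      5 * (b + p) + 4 * kL - tL ≤ capM kL (k - p)) :
    5 * b + 4 * k - t ≤ capM k p := by
  have HH : kH = 0 ∨ (0 ≤ 5 * b + 4 * kH - (t + k) ∧
      (5 * b + 4 * kH - (t + k) ≤ 37/10 * kH - 15/4 * k ∨
       5 * b + 4 * kH - (t + k) ≤ 33/10 * kH - 2 * k ∨
       5 * b + 4 * kH - (t + k) ≤ 3 * kH - k ∨
       5 * b + 4 * kH - (t + k) ≤ 21/10 * kH)) := by
    rcases eq_or_lt_of_le hkH with h | h
    · exact Or.inl h.symm
    · refine Or.inr ⟨(hH h).1, ?_⟩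
      have := (hH h).2
      unfold capM at this
      simp only [le_max_iff] at this
      tauto
  have HL : kL = 0 ∨ (0 ≤ 5 * (b + p) + 4 * kL - tL ∧
      (5 * (b + p) + 4 * kL - tL ≤ 37/10 * kL - 15/4 * (k - p) ∨
       5 * (b + p) + 4 * kL - tL ≤ 33/10 * kL - 2 * (k - p) ∨
       5 * (b + p) + 4 * kL - tL ≤ 3 * kL - (k - p) ∨
       5 * (b + p) + 4 * kL - tL ≤ 21/10 * kL)) := by
    rcases eq_or_lt_of_le hkL with h | h
    · exact Or.inl h.symm
    · refine Or.inr ⟨(hL h).1, ?_⟩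
      have := (hL h).2
      unfold capM at this
      simp only [le_max_iff] at this
      tauto
  unfold capM
  simp only [le_max_iff]
  rcases HH with hcH | ⟨hDH0, hcH | hcH | hcH | hcH⟩ <;>
  rcases HL with hcL | ⟨hDL0, hcL | hcL | hcL | hcL⟩ <;>
  (rcases le_total (33/10 * k - 2 * p) (37/10 * k - 15/4 * p) with g1 | g1
   · exact Or.inl (Or.inl (Or.inl (by linarith)))
   · rcases le_total (3 * k - p) (33/10 * k - 2 * p) with g2 | g2
     · exact Or.inl (Or.inl (Or.inr (by linarith)))
     · rcases le_total (21/10 * k) (3 * k - p) with g3 | g3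
       · exact Or.inl (Or.inr (by linarith))
       · exact Or.inr (by linarith))

/-- **There is no binary `5`-cap.**  There are no functions `κ, τ : W → ℝ`
such that: (i) `κ ≥ 0`, `κ_λ > 0`, the support of `κ` is finite and
prefix-closed; (ii) `τ_λ = 0` and `τ_{vH} = τ_v + κ_v`; and (iii) every box
`v` (i.e. `κ_v > 0`) satisfies `κ_{vL} ≥ 5(β_v + κ_v) - τ_{vL} ≥ 0` and
`κ_{vH} ≥ τ_{vL} - τ_v - κ_v ≥ 0`. -/
theorem no_binary_five_cap :
    ¬ ∃ (κ τ : Word → ℝ),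
      (∀ w : Word, 0 ≤ κ w) ∧
      0 < κ [] ∧
      {w : Word | 0 < κ w}.Finite ∧
      (∀ v : Word, 0 < κ (Letter.H :: v) ∨ 0 < κ (Letter.L :: v) → 0 < κ v) ∧
      τ [] = 0 ∧
      (∀ v : Word, τ (Letter.H :: v) = τ v + κ v) ∧
      (∀ v : Word, 0 < κ v →
        5 * (wt κ v + κ v) - τ (Letter.L :: v) ≤ κ (Letter.L :: v) ∧
        0 ≤ 5 * (wt κ v + κ v) - τ (Letter.L :: v) ∧
        τ (Letter.L :: v) - τ v - κ v ≤ κ (Letter.H :: v) ∧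
        0 ≤ τ (Letter.L :: v) - τ v - κ v) := by
  rintro ⟨κ, τ, hκ0, hkroot, hfin, hpref, htau0, htauH, hbox⟩
  -- `D_v ≥ 0` at every box
  have hDnn : ∀ v : Word, 0 < κ v → 0 ≤ 5 * wt κ v + 4 * κ v - τ v := by
    intro v hv
    obtain ⟨_, b2, _, b4⟩ := hbox v hv
    linarith
  -- the support has bounded length
  obtain ⟨N, hN⟩ := (hfin.image List.length).bddAbove
  have hNlen : ∀ v : Word, 0 < κ v → v.length ≤ N := fun v hv => hN ⟨v, hv, rfl⟩
  -- main induction (downwards from the leaves)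
  have main : ∀ m : ℕ, ∀ v : Word, N < v.length + m → 0 < κ v →
      5 * wt κ v + 4 * κ v - τ v ≤ capM (κ v) (pen κ v) := by
    intro m
    induction m with
    | zero =>
      intro v hlen hv
      have := hNlen v hv
      omega
    | succ m ih =>
      intro v hlen hv
      obtain ⟨b1, b2, b3, b4⟩ := hbox v hv
      refine five_cap_node (κ v) (pen κ v) (wt κ v) (τ v) (τ (Letter.L :: v))
        (κ (Letter.H :: v)) (κ (Letter.L :: v)) hv (hκ0 _) (hκ0 _) b1 b2 b3 b4 ?_ ?_
      · intro h
        constructor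
        · have h0 := hDnn (Letter.H :: v) h
          rw [htauH v] at h0
          exact h0
        · have hmax := ih (Letter.H :: v) (by simp only [List.length_cons]; omega) h
          rw [htauH v] at hmax
          exact hmax
      · intro h
        constructor
        · exact hDnn (Letter.L :: v) h
        · exact ih (Letter.L :: v) (by simp only [List.length_cons]; omega) h
  -- conclude at the root
  have h0 := main (N + 1) [] (by simp) hkroot
  have hw0 : wt κ ([] : Word) = 0 := rfl
  have hp0 : pen κ ([] : Word) = 0 := rfl
  rw [htau0, hw0, hp0] at h0
  unfold capM at h0
  simp only [le_max_iff] at h0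
  rcases h0 with ((h | h) | h) | h <;> linarith
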